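/- arXiv:2003.05271 — 2 statements merged into one kernel-verified Lean document; each statement's English description precedes it below -/
import Mathlib

section
/- Lemma (Söderlind-type bound): If x : [t₀, t₁] → ℝⁿ is differentiable and satisfies dx/dt = A(t)ᵀ x(t) + b(t) with x(t₀) = x₀, and ξ : [t₀, t₁] → ℝ satisfies dξ/dt = μ[A(t)ᵀ]·ξ(t) + ‖b(t)‖ with ξ(t₀) = ‖x₀‖, where μ is the 2-norm logarithmic norm, then ‖x(t)‖ ≤ ξ(t) for all t ∈ [t₀, t₁]. -/
open Matrix Filter Set Topology intervalIntegral

theorem symPart_isHermitian {n : ℕ} (A : Matrix (Fin n) (Fin n) ℝ) :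
    ((2:ℝ)⁻¹ • (A + Aᵀ)).IsHermitian := by
  unfold Matrix.IsHermitian
  rw [conjTranspose_smul]
  simp [Matrix.IsHermitian, conjTranspose_eq_transpose_of_trivial, transpose_add, add_comm]

/-- The 2-norm logarithmic norm `μ₂[A] = λ_max((A + Aᵀ)/2)`. -/
noncomputable def mu2 {n : ℕ} (A : Matrix (Fin n) (Fin n) ℝ) : ℝ :=
  ⨆ i, (symPart_isHermitian A).eigenvalues i

open scoped RealInnerProductSpace

lemma inner_toEuclideanCLM {d : ℕ} (M : Matrix (Fin d) (Fin d) ℝ) (y : EuclideanSpace ℝ (Fin d)) :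
    ⟪y, Matrix.toEuclideanCLM (𝕜 := ℝ) M y⟫ = dotProduct (⇑y) (M *ᵥ ⇑y) := by
  have h : ∀ j, (Matrix.toEuclideanCLM (𝕜 := ℝ) M y) j = (M *ᵥ ⇑y) j := by
    intro j
    exact congrFun (Matrix.ofLp_toEuclideanCLM (𝕜 := ℝ) M y) j
  simp only [PiLp.inner_apply, RCLike.inner_apply, conj_trivial, dotProduct]
  exact Finset.sum_congr rfl fun j _ => by rw [h j]; ring

lemma rayleigh_le {d : ℕ} {S : Matrix (Fin d) (Fin d) ℝ} (hS : S.IsHermitian)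
    (y : EuclideanSpace ℝ (Fin d)) :
    ⟪y, Matrix.toEuclideanCLM (𝕜 := ℝ) S y⟫ ≤ (⨆ i, hS.eigenvalues i) * ‖y‖ ^ 2 := by
  rcases Nat.eq_zero_or_pos d with hd | hd
  · subst hd
    have hy : y = 0 := Subsingleton.elim _ _
    simp [hy]
  · have hne : Nonempty (Fin d) := ⟨⟨0, hd⟩⟩
    set T := Matrix.toEuclideanCLM (𝕜 := ℝ) S with hT
    set v := hS.eigenvectorBasis with hv
    have hsym : ∀ u w : EuclideanSpace ℝ (Fin d), ⟪T u, w⟫ = ⟪u, T w⟫ := by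
      have h := Matrix.isHermitian_iff_isSymmetric.1 hS
      intro u w
      have := h u w
      simpa [← Matrix.coe_toEuclideanCLM_eq_toEuclideanLin] using this
    have hTv : ∀ i, T (v i) = hS.eigenvalues i • v i := by
      intro i
      have h1 : ∀ j, (T (v i)) j = (S *ᵥ ⇑(v i)) j :=
        fun j => congrFun (Matrix.ofLp_toEuclideanCLM (𝕜 := ℝ) S (v i)) j
      have h2 := hS.mulVec_eigenvectorBasis i
      ext j
      rw [h1 j, h2]
      rfl
    have key : ⟪y, T y⟫ = ∑ i, hS.eigenvalues i * (⟪v i, y⟫ * ⟪v i, y⟫) := by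
      rw [← OrthonormalBasis.sum_inner_mul_inner v y (T y)]
      refine Finset.sum_congr rfl fun i _ => ?_
      rw [← hsym (v i) y, hTv i, real_inner_smul_left, real_inner_comm y (v i)]
      ring
    have parseval : ∑ i, ⟪v i, y⟫ * ⟪v i, y⟫ = ‖y‖ ^ 2 := by
      rw [← real_inner_self_eq_norm_sq, ← OrthonormalBasis.sum_inner_mul_inner v y y]
      exact Finset.sum_congr rfl fun i _ => by rw [real_inner_comm y (v i)]
    rw [key, ← parseval, Finset.mul_sum]
    refine Finset.sum_le_sum fun i _ => ?_
    have hle : hS.eigenvalues i ≤ ⨆ j, hS.eigenvalues j :=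
      le_ciSup (Set.Finite.bddAbove (Set.finite_range _)) i
    exact mul_le_mul_of_nonneg_right hle (mul_self_nonneg _)

lemma dot_transpose {d : ℕ} (M : Matrix (Fin d) (Fin d) ℝ) (y : Fin d → ℝ) :
    dotProduct y (Mᵀ *ᵥ y) = dotProduct y (M *ᵥ y) := by
  rw [Matrix.mulVec_transpose, dotProduct_comm, ← dotProduct_mulVec]

lemma inner_le_mu2 {d : ℕ} (M : Matrix (Fin d) (Fin d) ℝ) (y : EuclideanSpace ℝ (Fin d)) :
    ⟪y, Matrix.toEuclideanCLM (𝕜 := ℝ) M y⟫ ≤ mu2 M * ‖y‖ ^ 2 := by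
  have h := rayleigh_le (symPart_isHermitian M) y
  rw [inner_toEuclideanCLM] at h ⊢
  rw [mu2]
  refine le_trans (le_of_eq ?_) h
  rw [Matrix.smul_mulVec, Matrix.add_mulVec, dotProduct_smul,
    dotProduct_add, dot_transpose]
  simp [smul_eq_mul]
  ring

lemma mu2_le_norm {d : ℕ} (M : Matrix (Fin d) (Fin d) ℝ) :
    mu2 M ≤ ‖Matrix.toEuclideanCLM (𝕜 := ℝ) ((2:ℝ)⁻¹ • (M + Mᵀ))‖ := by
  rcases Nat.eq_zero_or_pos d with hd | hd
  · subst hd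
    rw [mu2, Real.iSup_of_isEmpty]
    exact norm_nonneg _
  · have hne : Nonempty (Fin d) := ⟨⟨0, hd⟩⟩
    set hS := symPart_isHermitian M
    set T := Matrix.toEuclideanCLM (𝕜 := ℝ) ((2:ℝ)⁻¹ • (M + Mᵀ)) with hT
    refine ciSup_le fun i => ?_
    set v := hS.eigenvectorBasis i with hv
    have hnorm : ‖v‖ = 1 := hS.eigenvectorBasis.orthonormal.1 i
    have hTv : T v = hS.eigenvalues i • v := by
      have h1 : ∀ j, (T v) j = (((2:ℝ)⁻¹ • (M + Mᵀ)) *ᵥ ⇑v) j :=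
        fun j => congrFun (Matrix.ofLp_toEuclideanCLM (𝕜 := ℝ) _ v) j
      have h2 := hS.mulVec_eigenvectorBasis i
      ext j
      rw [h1 j, h2]
      rfl
    have : hS.eigenvalues i = ⟪v, T v⟫ := by
      rw [hTv, real_inner_smul_right, real_inner_self_eq_norm_sq, hnorm]
      ring
    rw [this]
    calc ⟪v, T v⟫ ≤ ‖v‖ * ‖T v‖ := real_inner_le_norm _ _
    _ ≤ ‖v‖ * (‖T‖ * ‖v‖) := by
        exact mul_le_mul_of_nonneg_left (T.le_opNorm v) (norm_nonneg _)
    _ = ‖T‖ := by rw [hnorm]; ring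

/-- Söderlind-type bound: if `x` solves `dx/dt = A(t)ᵀ x(t) + b(t)` with
`x(t₀) = x₀` and `ξ` solves the scalar IVP `dξ/dt = μ[A(t)ᵀ] ξ + ‖b(t)‖` with
`ξ(t₀) = ‖x₀‖`, then `‖x(t)‖ ≤ ξ(t)` on `[t₀, t₁]`. -/
theorem norm_le_of_soderlind {d : ℕ} (t₀ t₁ : ℝ) (ht : t₀ ≤ t₁)
    (A : ℝ → Matrix (Fin d) (Fin d) ℝ) (b : ℝ → EuclideanSpace ℝ (Fin d))
    (x : ℝ → EuclideanSpace ℝ (Fin d)) (ξ : ℝ → ℝ) (x₀ : EuclideanSpace ℝ (Fin d))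
    (hA : ContinuousOn A (Icc t₀ t₁)) (hb : ContinuousOn b (Icc t₀ t₁))
    (hx : ∀ t ∈ Icc t₀ t₁,
      HasDerivAt x (Matrix.toEuclideanCLM (𝕜 := ℝ) (A t)ᵀ (x t) + b t) t)
    (hx0 : x t₀ = x₀)
    (hξ : ∀ t ∈ Icc t₀ t₁, HasDerivAt ξ (mu2 (A t)ᵀ * ξ t + ‖b t‖) t)
    (hξ0 : ξ t₀ = ‖x₀‖) :
    ∀ t ∈ Icc t₀ t₁, ‖x t‖ ≤ ξ t := by
  -- a uniform bound on mu2
  obtain ⟨L, hL0, hLb⟩ : ∃ L : ℝ, 0 ≤ L ∧ ∀ t ∈ Icc t₀ t₁, mu2 (A t)ᵀ ≤ L := by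
    have hlin : Continuous (fun M : Matrix (Fin d) (Fin d) ℝ =>
        Matrix.toEuclideanCLM (𝕜 := ℝ) M) := by
      let Lm : Matrix (Fin d) (Fin d) ℝ →ₗ[ℝ]
          (EuclideanSpace ℝ (Fin d) →L[ℝ] EuclideanSpace ℝ (Fin d)) :=
        { toFun := fun M => Matrix.toEuclideanCLM (𝕜 := ℝ) M
          map_add' := fun a c => map_add _ a c
          map_smul' := fun c a => map_smul _ c a }
      exact Lm.continuous_of_finiteDimensional
    have hcont : ContinuousOn
        (fun t => Matrix.toEuclideanCLM (𝕜 := ℝ) ((2:ℝ)⁻¹ • ((A t)ᵀ + ((A t)ᵀ)ᵀ)))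
        (Icc t₀ t₁) := by
      apply hlin.comp_continuousOn
      refine ContinuousOn.const_smul (g := fun t => (A t)ᵀ + ((A t)ᵀ)ᵀ) ?_ ((2:ℝ)⁻¹ : ℝ)
      have htr : Continuous (fun M : Matrix (Fin d) (Fin d) ℝ => Mᵀ) :=
        continuous_id.matrix_transpose
      exact ((htr.comp_continuousOn hA).add
        (htr.comp_continuousOn (htr.comp_continuousOn hA)))
    obtain ⟨C, hC⟩ := isCompact_Icc.exists_bound_of_continuousOn hcont
    refine ⟨max C 0, le_max_right _ _, fun t htm => ?_⟩
    exact le_trans (mu2_le_norm _) (le_trans (hC t htm) (le_max_left _ _))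
  set f : ℝ → ℝ := fun t => ‖x t‖ with hf
  have hfc : ContinuousOn f (Icc t₀ t₁) :=
    fun t htm => ((hx t htm).continuousAt.continuousWithinAt).norm
  -- the liminf slope bound
  have hslope : ∀ t ∈ Ico t₀ t₁, ∀ r, mu2 (A t)ᵀ * ‖x t‖ + ‖b t‖ < r →
      ∃ᶠ z in 𝓝[>] t, slope f t z < r := by
    intro t htm r hr
    have htm' : t ∈ Icc t₀ t₁ := Ico_subset_Icc_self htm
    have hxt := hx t htm'
    set v := Matrix.toEuclideanCLM (𝕜 := ℝ) (A t)ᵀ (x t) + b t with hv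
    by_cases h0 : x t = 0
    · have hvr : ‖v‖ < r := by
        rw [hv, h0, map_zero, zero_add]
        have : mu2 (A t)ᵀ * ‖x t‖ = 0 := by rw [h0, norm_zero, mul_zero]
        linarith [hr, this.symm.le]
      have := hxt.hasDerivWithinAt.liminf_right_slope_norm_le hvr
      refine this.mono fun z hz => ?_
      rwa [slope_def_field, div_eq_inv_mul]
    · -- differentiable case
      have hpos : (0:ℝ) < ‖x t‖ := norm_pos_iff.2 h0
      have hsq : HasDerivAt (fun s => ‖x s‖ ^ 2) (2 * ⟪x t, v⟫) t := hxt.norm_sq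
      have hne : ‖x t‖ ^ 2 ≠ 0 := by positivity
      have hsqrt := (Real.hasDerivAt_sqrt hne).comp t hsq
      have hfd : HasDerivAt f (⟪x t, v⟫ / ‖x t‖) t := by
        have heq : (fun s => Real.sqrt (‖x s‖ ^ 2)) = f := by
          funext s; rw [Real.sqrt_sq (norm_nonneg _)]
        rw [← heq]
        refine hsqrt.congr_deriv ?_
        rw [Real.sqrt_sq (norm_nonneg _)]
        field_simp
      have hD : ⟪x t, v⟫ / ‖x t‖ < r := by
        have h1 : ⟪x t, v⟫ ≤ mu2 (A t)ᵀ * ‖x t‖ ^ 2 + ‖x t‖ * ‖b t‖ := by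
          rw [hv, inner_add_right]
          exact add_le_add (inner_le_mu2 _ _) (real_inner_le_norm _ _)
        rw [div_lt_iff₀ hpos]
        calc ⟪x t, v⟫ ≤ mu2 (A t)ᵀ * ‖x t‖ ^ 2 + ‖x t‖ * ‖b t‖ := h1
        _ = (mu2 (A t)ᵀ * ‖x t‖ + ‖b t‖) * ‖x t‖ := by ring
        _ < r * ‖x t‖ := by exact mul_lt_mul_of_pos_right hr hpos
      have htend : Tendsto (slope f t) (𝓝[>] t) (𝓝 (⟪x t, v⟫ / ‖x t‖)) :=
        (hasDerivAt_iff_tendsto_slope.1 hfd).mono_left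
          (nhdsWithin_mono t fun z hz => ne_of_gt hz)
      exact (htend.eventually_lt_const hD).frequently
  intro t htm
  have key : ∀ ε > 0, ‖x t‖ ≤ ξ t + ε * Real.exp ((L+1) * (t - t₀)) := by
    intro ε hε
    set B : ℝ → ℝ := fun s => ξ s + ε * Real.exp ((L+1) * (s - t₀)) with hBdef
    have hBc : ContinuousOn B (Icc t₀ t₁) := by
      apply ContinuousOn.add
      · exact fun s hs => (hξ s hs).continuousAt.continuousWithinAt
      · exact (continuous_const.mul
          ((continuous_const.mul (continuous_id.sub continuous_const)).rexp)).continuousOn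
    have hBd : ∀ s ∈ Ico t₀ t₁, HasDerivWithinAt B
        (mu2 (A s)ᵀ * ξ s + ‖b s‖ + ε * ((L+1) * Real.exp ((L+1) * (s - t₀)))) (Ici s) s := by
      intro s hs
      have h1 := hξ s (Ico_subset_Icc_self hs)
      have h0 : HasDerivAt (fun u => (L+1) * (u - t₀)) ((L+1) * 1) s :=
        ((hasDerivAt_id s).sub_const t₀).const_mul (L+1)
      have h2 : HasDerivAt (fun u => ε * Real.exp ((L+1) * (u - t₀)))
          (ε * (Real.exp ((L+1) * (s - t₀)) * ((L+1) * 1))) s := h0.exp.const_mul ε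
      have h3 := h1.add h2
      refine (HasDerivAt.hasDerivWithinAt ?_)
      refine h3.congr_deriv ?_
      ring
    have bound : ∀ s ∈ Ico t₀ t₁, f s = B s →
        mu2 (A s)ᵀ * ‖x s‖ + ‖b s‖ <
          mu2 (A s)ᵀ * ξ s + ‖b s‖ + ε * ((L+1) * Real.exp ((L+1) * (s - t₀))) := by
      intro s hs heq
      have hE : (0:ℝ) < Real.exp ((L+1) * (s - t₀)) := Real.exp_pos _
      have hmu := hLb s (Ico_subset_Icc_self hs)
      have heq' : ‖x s‖ = ξ s + ε * Real.exp ((L+1) * (s - t₀)) := heq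
      rw [heq']
      have hεE : 0 < ε * Real.exp ((L+1) * (s - t₀)) := mul_pos hε hE
      nlinarith [hεE, hmu]
    have ha : f t₀ ≤ B t₀ := by
      have : B t₀ = ξ t₀ + ε * Real.exp ((L+1) * (t₀ - t₀)) := rfl
      rw [this, hξ0]
      have : f t₀ = ‖x₀‖ := by rw [hf]; simp [hx0]
      rw [this]
      have hE : (0:ℝ) < Real.exp ((L+1) * (t₀ - t₀)) := Real.exp_pos _
      nlinarith
    exact image_le_of_liminf_slope_right_lt_deriv_boundary' hfc hslope ha hBc hBd bound htm
  refine le_of_forall_pos_le_add fun δ hδ => ?_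
  have hE : (0:ℝ) < Real.exp ((L+1) * (t - t₀)) := Real.exp_pos _
  have h := key (δ / Real.exp ((L+1) * (t - t₀))) (by positivity)
  rwa [div_mul_cancel₀ _ (ne_of_gt hE)] at h
end

section
/- The barycentric weights for Chebyshev points of the first kind, τ_n = cos((2n+1)π/(2N+2)) for n = 0,…,N, are proportional to w_n = (-1)ⁿ · sin((2n+1)π/(2N+2)); i.e., the standard barycentric weight ∏_{k≠n} (τ_n - τ_k)⁻¹ equals c_N · (-1)ⁿ sin((2n+1)π/(2N+2)) for a constant c_N independent of n. -/
open Filter Set Real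
open Polynomial Polynomial.Chebyshev Finset

lemma cheb_deg_coeff (n : ℕ) :
    (T ℝ n).natDegree ≤ n ∧ (T ℝ (n + 1)).natDegree ≤ n + 1 ∧
      (T ℝ (n + 1)).coeff (n + 1) = 2 ^ n := by
  induction n with
  | zero =>
    refine ⟨by simp, ?_, by simp⟩
    show (T ℝ 1).natDegree ≤ 1
    simp
  | succ n ih =>
    obtain ⟨h0, h1, h2⟩ := ih
    have hT : T ℝ ((n : ℤ) + 1 + 1) = 2 * X * T ℝ ((n : ℤ) + 1) - T ℝ n := by
      have h := T_add_two ℝ (n : ℤ)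
      have e : (n:ℤ)+1+1 = (n:ℤ)+2 := by ring
      rw [e, h]
    have hcast : ((n + 1 : ℕ) : ℤ) = (n : ℤ) + 1 := by push_cast; ring
    have hcast2 : ((n + 1 : ℕ) : ℤ) + 1 = (n : ℤ) + 1 + 1 := by push_cast; ring
    have hdeg2 : (T ℝ ((n : ℤ) + 1 + 1)).natDegree ≤ n + 2 := by
      rw [hT]
      refine (natDegree_sub_le _ _).trans (max_le ?_ (h0.trans (by omega)))
      refine (natDegree_mul_le).trans ?_
      have : ((2 * X : ℝ[X])).natDegree ≤ 1 := by
        refine (natDegree_mul_le).trans ?_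
        simp
      omega
    have hco : (T ℝ ((n : ℤ) + 1 + 1)).coeff (n + 2) = 2 ^ (n + 1) := by
      rw [hT]
      rw [coeff_sub, mul_assoc]
      have h2X : (2 * (X * T ℝ ((n : ℤ) + 1)) : ℝ[X]) = Polynomial.C 2 * (X * T ℝ ((n : ℤ) + 1)) := by
        rw [map_ofNat Polynomial.C 2]
      rw [h2X, coeff_C_mul]
      have : (X * T ℝ ((n : ℤ) + 1)).coeff (n + 2) = (T ℝ ((n : ℤ) + 1)).coeff (n + 1) := by
        simpa using coeff_X_mul (T ℝ ((n : ℤ) + 1)) (n + 1)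
      rw [this, h2, coeff_eq_zero_of_natDegree_lt (lt_of_le_of_lt h0 (by omega))]
      ring
    refine ⟨by rwa [hcast], by rw [hcast2]; exact hdeg2, by rw [hcast2]; exact hco⟩
/-- The barycentric weights for Chebyshev points of the first kind
`τ_n = cos((2n+1)π/(2N+2))` are proportional to
`w_n = (-1)ⁿ sin((2n+1)π/(2N+2))`: the standard barycentric weight
`λ_n = ∏_{k≠n} (τ_n - τ_k)⁻¹` equals `c_N · w_n` for a constant `c_N`
independent of `n`. -/
theorem chebyshev_barycentric_weights (N : ℕ) :
    ∃ c : ℝ, ∀ n : Fin (N + 1),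
      (∏ k ∈ Finset.univ.erase n,
          (Real.cos ((2 * (n : ℕ) + 1) * Real.pi / (2 * N + 2)) -
            Real.cos ((2 * (k : ℕ) + 1) * Real.pi / (2 * N + 2))))⁻¹ =
        c * ((-1) ^ (n : ℕ) * Real.sin ((2 * (n : ℕ) + 1) * Real.pi / (2 * N + 2))) := by
  refine ⟨2 ^ N / (N + 1), fun n => ?_⟩
  have pi_pos := Real.pi_pos
  set θ : Fin (N + 1) → ℝ := fun k => (2 * (k : ℕ) + 1) * Real.pi / (2 * N + 2) with hθ
  set τ : Fin (N + 1) → ℝ := fun k => Real.cos (θ k) with hτ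
  -- basic bounds
  have hden : (0:ℝ) < 2 * N + 2 := by positivity
  have hθpos : ∀ k : Fin (N + 1), 0 < θ k := by
    intro k; exact div_pos (by positivity) hden
  have hθlt : ∀ k : Fin (N + 1), θ k < π := by
    intro k
    rw [hθ, div_lt_iff₀ hden]
    have hk : (k : ℕ) ≤ N := Nat.lt_succ_iff.mp k.isLt
    have h2 : ((k:ℕ):ℝ) ≤ N := by exact_mod_cast hk
    nlinarith
  have hsinpos : ∀ k : Fin (N + 1), 0 < Real.sin (θ k) :=
    fun k => Real.sin_pos_of_pos_of_lt_pi (hθpos k) (hθlt k)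
  have hNθ : ∀ k : Fin (N + 1), ((N : ℝ) + 1) * θ k = (k : ℕ) * π + π / 2 := by
    intro k; rw [hθ]; field_simp
  have hcos0 : ∀ k : Fin (N + 1), Real.cos (((N : ℝ) + 1) * θ k) = 0 := by
    intro k
    rw [hNθ, Real.cos_add_pi_div_two, Real.sin_nat_mul_pi, neg_zero]
  have hsinval : ∀ k : Fin (N + 1),
      Real.sin (((N : ℝ) + 1) * θ k) = (-1) ^ (k : ℕ) := by
    intro k
    rw [hNθ, Real.sin_add_pi_div_two]
    simpa using Real.cos_nat_mul_pi_sub 0 (k : ℕ)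
  -- injectivity
  have hinj : Set.InjOn τ ↑(Finset.univ : Finset (Fin (N + 1))) := by
    intro a _ b _ hab
    have h1 : θ a = θ b :=
      Real.injOn_cos ⟨(hθpos a).le, (hθlt a).le⟩ ⟨(hθpos b).le, (hθlt b).le⟩ hab
    have h2 : ((a : ℕ) : ℝ) = ((b : ℕ) : ℝ) := by
      rw [hθ] at h1
      field_simp at h1
      linarith
    exact Fin.ext (by exact_mod_cast h2)
  -- the nodal polynomial
  set P : Polynomial ℝ := Lagrange.nodal Finset.univ τ with hP
  have hcard : (Finset.univ : Finset (Fin (N + 1))).card = N + 1 := by simp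
  have hPdeg : P.natDegree = N + 1 := by rw [hP, Lagrange.natDegree_nodal, hcard]
  have hPmonic : P.Monic := Lagrange.nodal_monic
  obtain ⟨hT0, hT1, hT2⟩ := cheb_deg_coeff N
  have hcastN : ((N : ℤ) + 1) = ((N + 1 : ℕ) : ℤ) := by push_cast; ring
  -- T (N+1) = 2^N * P
  have key : T ℝ ((N : ℤ) + 1) = Polynomial.C ((2:ℝ) ^ N) * P := by
    rw [← sub_eq_zero]
    apply Polynomial.eq_zero_of_degree_lt_of_eval_index_eq_zero (v := τ) _ hinj
    · rw [hcard]
      rw [Polynomial.degree_lt_iff_coeff_zero]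
      intro m hm
      have hTdeg : (T ℝ ((N : ℤ) + 1)).natDegree ≤ N + 1 := by rw [hcastN]; exact hT1
      have hCP : (Polynomial.C ((2:ℝ) ^ N) * P).natDegree ≤ N + 1 := by
        refine Polynomial.natDegree_mul_le.trans ?_
        simp [hPdeg]
      rcases eq_or_lt_of_le hm with h | h
      · rw [Polynomial.coeff_sub, ← h]
        rw [hcastN] at hT2 ⊢
        rw [hT2, Polynomial.coeff_C_mul]
        have hc1 : P.coeff (N + 1) = 1 := by
          have := hPmonic.coeff_natDegree
          rwa [hPdeg] at this
        rw [hc1]; ring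
      · rw [Polynomial.coeff_sub,
          Polynomial.coeff_eq_zero_of_natDegree_lt (lt_of_le_of_lt hTdeg h),
          Polynomial.coeff_eq_zero_of_natDegree_lt (lt_of_le_of_lt hCP h), sub_zero]
    · intro i _
      rw [Polynomial.eval_sub, Polynomial.eval_mul, Polynomial.eval_C]
      have h1 := Polynomial.Chebyshev.T_real_cos (θ i) ((N : ℤ) + 1)
      have h2 : P.eval (τ i) = 0 := Lagrange.eval_nodal_at_node (Finset.mem_univ i)
      rw [show τ i = Real.cos (θ i) from rfl, h1, h2]
      push_cast
      rw [hcos0 i]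
      ring
  -- differentiate and evaluate at τ n
  have hder := congrArg (Polynomial.eval (τ n) ∘ Polynomial.derivative) key
  simp only [Function.comp_apply] at hder
  rw [T_derivative_eq_U, Polynomial.derivative_C_mul,
    show ((N : ℤ) + 1 - 1) = (N : ℤ) by ring] at hder
  simp only [Polynomial.eval_mul, Polynomial.eval_C, Polynomial.eval_intCast] at hder
  have hprodeval : (Polynomial.derivative P).eval (τ n) =
      ∏ k ∈ Finset.univ.erase n, (τ n - τ k) := by
    rw [hP, Lagrange.eval_nodal_derivative_eval_node_eq (Finset.mem_univ n),
      Lagrange.eval_nodal]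
  rw [hprodeval] at hder
  have hU : (U ℝ (N : ℤ)).eval (τ n) * Real.sin (θ n) = (-1) ^ (n : ℕ) := by
    have h := Polynomial.Chebyshev.U_real_cos (θ n) (N : ℤ)
    have hτn : τ n = Real.cos (θ n) := rfl
    rw [hτn, h, show ((((N:ℤ)):ℝ) + 1) * θ n = ((N:ℝ)+1) * θ n by push_cast; ring]
    exact hsinval n
  set p := ∏ k ∈ Finset.univ.erase n, (τ n - τ k) with hp
  have E : 2 ^ N * p * Real.sin (θ n) = ((N : ℝ) + 1) * (-1) ^ (n : ℕ) := by
    rw [← hU]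
    push_cast at hder
    linear_combination (-Real.sin (θ n)) * hder
  have hs : Real.sin (θ n) ≠ 0 := (hsinpos n).ne'
  have hw : ((-1 : ℝ)) ^ (n : ℕ) * (-1) ^ (n : ℕ) = 1 := by
    rw [← pow_add]
    exact Even.neg_one_pow ⟨(n : ℕ), rfl⟩
  have hN1 : ((N : ℝ) + 1) ≠ 0 := by positivity
  show p⁻¹ = 2 ^ N / ((N:ℝ) + 1) * ((-1) ^ (n : ℕ) * Real.sin (θ n))
  refine inv_eq_of_mul_eq_one_right ?_
  rw [mul_comm]
  field_simp
  linear_combination (-1:ℝ) ^ (n : ℕ) * E + ((N:ℝ)+1) * hw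
end
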